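/- arXiv:1412.7281 — 2 statements merged into one kernel-verified Lean document; each statement's English description precedes it below -/
import Mathlib

section
/- Let L be the Laplacian of a strongly connected weighted directed graph with row sums dᵢ of A, and let 0 < α < 1/maxᵢ dᵢ. Then Q = I - αL - 1ωᵀ has spectral radius ρ(Q) < 1, where ω is the normalized left zero-eigenvector of L. -/
open Matrix

private lemma conj_mul_self_re (z : ℂ) : ((starRingEnd ℂ) z * z).re = ‖z‖ ^ 2 := by
  rw [show (starRingEnd ℂ) z * z = (Complex.normSq z : ℂ) from
    Complex.normSq_eq_conj_mul_self.symm]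
  simp [Complex.normSq_eq_norm_sq, ← Complex.ofReal_pow]

lemma max_step (n : ℕ) (A : Matrix (Fin n) (Fin n) ℝ) (hA : ∀ i j, 0 ≤ A i j)
    (d : Fin n → ℝ)
    (v : Fin n → ℂ) (hv : ∀ i, (d i : ℂ) * v i = ∑ j, (A i j : ℂ) * v j)
    (hd : ∀ i, d i = ∑ j, A i j)
    (b a : Fin n) (hmax : ∀ j, ‖v j‖ ≤ ‖v b‖) (hedge : 0 < A b a) :
    v a = v b := by
  by_cases hb0 : v b = 0
  · have h1 : ‖v a‖ ≤ 0 := by simpa [hb0] using hmax a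
    rw [norm_le_zero_iff.mp h1, hb0]
  set M := ‖v b‖ with hM
  have hMpos : 0 < M := norm_pos_iff.mpr hb0
  set f : Fin n → ℝ := fun j => ((starRingEnd ℂ) (v b) * v j).re with hf
  have hfb : f b = M ^ 2 := conj_mul_self_re (v b)
  have hfle : ∀ j, f j ≤ M ^ 2 := by
    intro j
    calc f j ≤ ‖(starRingEnd ℂ) (v b) * v j‖ := Complex.re_le_norm _
    _ = ‖v b‖ * ‖v j‖ := by rw [norm_mul, Complex.norm_conj]
    _ ≤ M * M := mul_le_mul le_rfl (hmax j) (norm_nonneg _) (norm_nonneg _)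
    _ = M ^ 2 := (sq M).symm
  have key : ∑ j, A b j * (M ^ 2 - f j) = 0 := by
    have h2 : ∑ j, A b j * f j = d b * M ^ 2 := by
      have h3 : ∑ j, A b j * f j = ((starRingEnd ℂ) (v b) * ∑ j, (A b j : ℂ) * v j).re := by
        rw [Finset.mul_sum, Complex.re_sum]
        refine Finset.sum_congr rfl fun j _ => ?_
        rw [show (starRingEnd ℂ) (v b) * ((A b j : ℂ) * v j)
            = (A b j : ℂ) * ((starRingEnd ℂ) (v b) * v j) by ring, Complex.mul_re]
        simp [hf]
      rw [h3, ← hv b, show (starRingEnd ℂ) (v b) * ((d b : ℂ) * v b)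
          = (d b : ℂ) * ((starRingEnd ℂ) (v b) * v b) by ring, Complex.mul_re,
        Complex.ofReal_re, Complex.ofReal_im, conj_mul_self_re, zero_mul, sub_zero]
    have h4 : ∑ j, A b j * M ^ 2 = d b * M ^ 2 := by
      rw [← Finset.sum_mul, ← hd b]
    simp only [mul_sub]
    rw [Finset.sum_sub_distrib, h4, h2, sub_self]
  have hterm : A b a * (M ^ 2 - f a) = 0 := by
    rw [Finset.sum_eq_zero_iff_of_nonneg] at key
    · exact key a (Finset.mem_univ a)
    · intro j _
      exact mul_nonneg (hA b j) (by linarith [hfle j])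
  have hfa : f a = M ^ 2 := by
    have := (mul_eq_zero.mp hterm).resolve_left (ne_of_gt hedge)
    linarith
  have habs : ‖(starRingEnd ℂ) (v b) * v a‖ ≤ M ^ 2 := by
    rw [norm_mul, Complex.norm_conj, sq]
    exact mul_le_mul le_rfl (hmax a) (norm_nonneg _) (norm_nonneg _)
  set z := (starRingEnd ℂ) (v b) * v a with hz
  have him : z.im = 0 := by
    have h5 : z.re ^ 2 + z.im ^ 2 = ‖z‖ ^ 2 := by
      rw [← Complex.normSq_eq_norm_sq, Complex.normSq_apply]; ring
    have h6 : ‖z‖ ^ 2 ≤ M ^ 4 := by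
      have := norm_nonneg z
      nlinarith
    have h7 : z.re = M ^ 2 := hfa
    nlinarith
  have hza : z = ((M ^ 2 : ℝ) : ℂ) := by
    refine Complex.ext ?_ ?_
    · rw [Complex.ofReal_re]; exact hfa
    · rw [Complex.ofReal_im]; exact him
  have hzb : (starRingEnd ℂ) (v b) * v b = ((M ^ 2 : ℝ) : ℂ) := by
    rw [show (starRingEnd ℂ) (v b) * v b = (Complex.normSq (v b) : ℂ) from
      Complex.normSq_eq_conj_mul_self.symm]
    norm_cast
    rw [Complex.normSq_eq_norm_sq]
  have hconj : (starRingEnd ℂ) (v b) ≠ 0 := by simpa using hb0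
  exact mul_left_cancel₀ hconj (hza.trans hzb.symm)
lemma max_propagate (n : ℕ) (A : Matrix (Fin n) (Fin n) ℝ) (hA : ∀ i j, 0 ≤ A i j)
    (d : Fin n → ℝ)
    (v : Fin n → ℂ) (hv : ∀ i, (d i : ℂ) * v i = ∑ j, (A i j : ℂ) * v j)
    (hd : ∀ i, d i = ∑ j, A i j)
    (i0 : Fin n) (hmax : ∀ j, ‖v j‖ ≤ ‖v i0‖) :
    ∀ a b : Fin n, Relation.TransGen (fun a b => 0 < A b a) a b → ‖v b‖ = ‖v i0‖ → v a = v b := by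
  intro a b hab
  induction hab with
  | @single b h =>
      intro hb
      exact max_step n A hA d v hv hd b a (fun j => le_of_le_of_eq (hmax j) hb.symm) h
  | @tail b c h1 h2 ih =>
      intro hc
      have hbc : v b = v c :=
        max_step n A hA d v hv hd c b (fun j => le_of_le_of_eq (hmax j) hc.symm) h2
      have hb : ‖v b‖ = ‖v i0‖ := by rw [hbc, hc]
      rw [ih hb, hbc]

/-- If G is a strongly connected weighted digraph with weight matrix A (no
    self-loops), Laplacian L = D - A with dᵢ = Σⱼ aᵢⱼ, ω the left eigenvector
    of L for eigenvalue 0 with 1ᵀω = 1, and 0 < α < 1/maxᵢ dᵢ, then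
    Q = I - αL - 1ωᵀ has spectral radius < 1 (every complex spectral value of Q
    has modulus < 1). -/
theorem spectral_radius_lt_one_of_alpha_small (n : ℕ) [NeZero n]
    (A : Matrix (Fin n) (Fin n) ℝ)
    (hA_nonneg : ∀ i j, 0 ≤ A i j)
    (hA_noloop : ∀ i, A i i = 0)
    (hconn : ∀ i j : Fin n, i ≠ j → Relation.TransGen (fun a b => 0 < A b a) i j)
    (d : Fin n → ℝ) (hd : ∀ i, d i = ∑ j, A i j)
    (L : Matrix (Fin n) (Fin n) ℝ) (hL : L = diagonal d - A)
    (ω : Fin n → ℝ)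
    (hleft : ω ᵥ* L = 0)
    (hnorm : ∑ i, ω i = 1)
    (α : ℝ) (hα0 : 0 < α) (hα : α < 1 / (Finset.univ.sup' Finset.univ_nonempty d))
    (Q : Matrix (Fin n) (Fin n) ℝ)
    (hQ : Q = 1 - α • L - vecMulVec (fun _ => 1) ω) :
    ∀ μ ∈ spectrum ℂ (Q.map Complex.ofReal), ‖μ‖ < 1 := by
  intro μ hμ
  by_cases hμ0 : μ = 0
  · rw [hμ0]; simp
  set D := Finset.univ.sup' Finset.univ_nonempty d with hD
  have hdnonneg : ∀ i, 0 ≤ d i := fun i =>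
    (hd i) ▸ Finset.sum_nonneg fun j _ => hA_nonneg i j
  have hDpos : 0 < D := by
    by_contra h
    push_neg at h
    have h1 : 1 / D ≤ 0 := by
      rcases lt_or_eq_of_le h with h' | h'
      · exact le_of_lt (div_neg_of_pos_of_neg one_pos h')
      · simp [h']
    linarith [hα0.trans hα]
  have hdD : ∀ i, d i ≤ D := fun i => Finset.le_sup' d (Finset.mem_univ i)
  have hαD : α * D < 1 := (lt_div_iff₀ hDpos).mp hα
  -- extract an eigenvector
  rw [spectrum.mem_iff] at hμ
  have hdet : (μ • (1 : Matrix (Fin n) (Fin n) ℂ) - Q.map Complex.ofReal).det = 0 := by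
    by_contra hne
    exact hμ (by
      rw [Algebra.algebraMap_eq_smul_one]
      exact (Matrix.isUnit_iff_isUnit_det _).mpr (isUnit_iff_ne_zero.mpr hne))
  obtain ⟨v, hv0, hveq⟩ := (Matrix.exists_mulVec_eq_zero_iff).mpr hdet
  have hv : ∀ i, ∑ j, (Q i j : ℂ) * v j = μ * v i := by
    intro i
    have h1 := congrFun hveq i
    simp only [Matrix.sub_mulVec, Matrix.smul_mulVec, Matrix.one_mulVec,
      Pi.sub_apply, Pi.smul_apply, Pi.zero_apply, smul_eq_mul] at h1
    have h2 : ((Q.map Complex.ofReal) *ᵥ v) i = ∑ j, (Q i j : ℂ) * v j := by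
      simp [Matrix.mulVec, dotProduct, Matrix.map_apply]
    rw [h2] at h1
    linear_combination -h1
  have hQe : ∀ i j, Q i j = (if i = j then (1 : ℝ) else 0) - α * L i j - ω j := by
    intro i j
    rw [hQ]
    simp [Matrix.sub_apply, Matrix.smul_apply, Matrix.one_apply, Matrix.vecMulVec_apply,
      smul_eq_mul]
  have hLe : ∀ i j, L i j = (if i = j then d i else 0) - A i j := by
    intro i j
    rw [hL]
    simp [Matrix.sub_apply, Matrix.diagonal_apply]
  -- ω is a left null vector of Q
  have hωL : ∀ j, ∑ i, ω i * L i j = 0 := by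
    intro j
    have h1 := congrFun hleft j
    simpa [Matrix.vecMul, dotProduct] using h1
  have hωQ : ∀ j, ∑ i, ω i * Q i j = 0 := by
    intro j
    calc ∑ i, ω i * Q i j
        = ∑ i, (ω i * (if i = j then (1 : ℝ) else 0) - α * (ω i * L i j) - ω i * ω j) := by
          refine Finset.sum_congr rfl fun i _ => ?_
          rw [hQe i j]; ring
      _ = (∑ i, ω i * (if i = j then (1 : ℝ) else 0)) - α * (∑ i, ω i * L i j)
            - (∑ i, ω i) * ω j := by
          rw [Finset.sum_sub_distrib, Finset.sum_sub_distrib, Finset.mul_sum, Finset.sum_mul]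
      _ = ω j - α * 0 - 1 * ω j := by
          rw [hωL j, hnorm]
          congr 2
          simp [mul_ite, mul_one, mul_zero]
      _ = 0 := by ring
  -- μ * (ωᵀ v) = 0, hence ωᵀ v = 0
  have hc : μ * (∑ i, (ω i : ℂ) * v i) = 0 := by
    calc μ * ∑ i, (ω i : ℂ) * v i = ∑ i, (ω i : ℂ) * (μ * v i) := by
          rw [Finset.mul_sum]; refine Finset.sum_congr rfl fun i _ => by ring
      _ = ∑ i, ∑ j, (ω i : ℂ) * ((Q i j : ℂ) * v j) := by
          refine Finset.sum_congr rfl fun i _ => ?_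
          rw [← hv i, Finset.mul_sum]
      _ = ∑ j, (∑ i, (ω i : ℂ) * (Q i j : ℂ)) * v j := by
          rw [Finset.sum_comm]
          refine Finset.sum_congr rfl fun j _ => ?_
          rw [Finset.sum_mul]
          refine Finset.sum_congr rfl fun i _ => by ring
      _ = 0 := by
          refine Finset.sum_eq_zero fun j _ => ?_
          have h1 : (∑ i, (ω i : ℂ) * (Q i j : ℂ)) = ((∑ i, ω i * Q i j : ℝ) : ℂ) := by
            push_cast; rfl
          rw [h1, hωQ j]
          simp
  have hcc : ∑ i, (ω i : ℂ) * v i = 0 := by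
    rcases mul_eq_zero.mp hc with h | h
    · exact absurd h hμ0
    · exact h
  -- v is an eigenvector of L with eigenvalue lam = (1-μ)/α
  have hαc : (α : ℂ) ≠ 0 := Complex.ofReal_ne_zero.mpr (ne_of_gt hα0)
  set lam : ℂ := (1 - μ) / (α : ℂ) with hlam
  have hLv : ∀ i, ∑ j, (L i j : ℂ) * v j = lam * v i := by
    intro i
    have h1 := hv i
    have h2 : ∑ j, (Q i j : ℂ) * v j
        = (∑ j, (if i = j then (1 : ℂ) else 0) * v j)
          - (α : ℂ) * (∑ j, (L i j : ℂ) * v j) - ∑ j, (ω j : ℂ) * v j := by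
      rw [Finset.mul_sum, ← Finset.sum_sub_distrib, ← Finset.sum_sub_distrib]
      refine Finset.sum_congr rfl fun j _ => ?_
      rw [hQe i j]
      split_ifs with h <;> push_cast <;> ring
    have h3 : ∑ j, (if i = j then (1 : ℂ) else 0) * v j = v i := by
      simp [ite_mul, Finset.sum_ite_eq]
    rw [h2, h3, hcc] at h1
    rw [hlam, div_mul_eq_mul_div, eq_div_iff hαc]
    linear_combination -h1
  by_cases hlam0 : lam = 0
  · -- then L v = 0 and v must be constant, contradicting ωᵀ v = 0
    exfalso
    have hv' : ∀ i, (d i : ℂ) * v i = ∑ j, (A i j : ℂ) * v j := by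
      intro i
      have h1 := hLv i
      rw [hlam0, zero_mul] at h1
      have h2 : ∑ j, (L i j : ℂ) * v j
          = (∑ j, (if i = j then ((d i : ℂ)) else 0) * v j) - ∑ j, (A i j : ℂ) * v j := by
        rw [← Finset.sum_sub_distrib]
        refine Finset.sum_congr rfl fun j _ => ?_
        rw [hLe i j]
        split_ifs with h <;> push_cast <;> ring
      have h3 : ∑ j, (if i = j then ((d i : ℂ)) else 0) * v j = (d i : ℂ) * v i := by
        simp [ite_mul, Finset.sum_ite_eq]
      rw [h2, h3] at h1
      linear_combination h1
    obtain ⟨i0, -, hi0⟩ := Finset.exists_mem_eq_sup' Finset.univ_nonempty (fun i => ‖v i‖)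
    have hmax : ∀ j, ‖v j‖ ≤ ‖v i0‖ := fun j =>
      hi0 ▸ Finset.le_sup' (fun i => ‖v i‖) (Finset.mem_univ j)
    have hall : ∀ j, v j = v i0 := by
      intro j
      by_cases hj : j = i0
      · rw [hj]
      · exact max_propagate n A hA_nonneg d v hv' hd i0 hmax j i0 (hconn j i0 hj) rfl
    have hvi0 : v i0 ≠ 0 := by
      intro h0
      apply hv0
      funext k
      rw [hall k, h0]; rfl
    apply hvi0
    calc v i0 = (1 : ℂ) * v i0 := (one_mul _).symm
      _ = (∑ i, (ω i : ℂ)) * v i0 := by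
          congr 1
          rw [← Complex.ofReal_sum, hnorm, Complex.ofReal_one]
      _ = ∑ i, (ω i : ℂ) * v i := by
          rw [Finset.sum_mul]
          exact Finset.sum_congr rfl fun i _ => by rw [hall i]
      _ = 0 := hcc
  · -- lam ≠ 0 : use Gershgorin
    have heig : Module.End.HasEigenvalue (Matrix.toLin' (L.map Complex.ofReal)) lam := by
      refine Module.End.hasEigenvalue_of_hasEigenvector ⟨?_, hv0⟩
      rw [Module.End.mem_eigenspace_iff, Matrix.toLin'_apply]
      funext i
      simp only [Matrix.mulVec, dotProduct, Matrix.map_apply, Pi.smul_apply,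
        smul_eq_mul]
      exact hLv i
    obtain ⟨k, hk⟩ := eigenvalue_mem_ball heig
    have hcen : (L.map Complex.ofReal) k k = (d k : ℂ) := by
      simp only [Matrix.map_apply]
      rw [hLe k k, if_pos rfl, hA_noloop k]
      push_cast; ring
    have hrad : ∑ j ∈ Finset.univ.erase k, ‖(L.map Complex.ofReal) k j‖ = d k := by
      have h1 : ∀ j ∈ Finset.univ.erase k, ‖(L.map Complex.ofReal) k j‖ = A k j := by
        intro j hj
        have hjk : k ≠ j := (Finset.ne_of_mem_erase hj).symm
        simp only [Matrix.map_apply]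
        rw [hLe k j, if_neg hjk, zero_sub, Complex.norm_real, Real.norm_eq_abs,
          abs_neg, abs_of_nonneg (hA_nonneg k j)]
      rw [Finset.sum_congr rfl h1, Finset.sum_erase_eq_sub (Finset.mem_univ k),
        hA_noloop k, ← hd k, sub_zero]
    rw [hcen, hrad, Metric.mem_closedBall, Complex.dist_eq] at hk
    have hball : (lam.re - d k) ^ 2 + lam.im ^ 2 ≤ (d k) ^ 2 := by
      have h2 : ‖lam - (d k : ℂ)‖ ^ 2 = (lam.re - d k) ^ 2 + lam.im ^ 2 := by
        rw [← Complex.normSq_eq_norm_sq, Complex.normSq_apply]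
        simp [Complex.sub_re, Complex.sub_im, Complex.ofReal_re, Complex.ofReal_im]
        ring
      nlinarith [norm_nonneg (lam - (d k : ℂ)), hdnonneg k]
    have hxy : lam.re ^ 2 + lam.im ^ 2 ≤ 2 * d k * lam.re := by nlinarith
    have hpos : 0 < lam.re ^ 2 + lam.im ^ 2 := by
      have h1 := Complex.normSq_pos.mpr hlam0
      rw [Complex.normSq_apply] at h1
      nlinarith
    have hx : 0 < lam.re := by nlinarith [hdnonneg k]
    have hμeq : μ = 1 - (α : ℂ) * lam := by
      rw [hlam]; field_simp; ring
    have hre : μ.re = 1 - α * lam.re := by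
      rw [hμeq]
      simp [Complex.sub_re, Complex.mul_re, Complex.ofReal_re, Complex.ofReal_im]
    have him : μ.im = -(α * lam.im) := by
      rw [hμeq]
      simp [Complex.sub_im, Complex.mul_im, Complex.ofReal_re, Complex.ofReal_im]
    have hn2 : ‖μ‖ ^ 2 = μ.re ^ 2 + μ.im ^ 2 := by
      rw [← Complex.normSq_eq_norm_sq, Complex.normSq_apply]; ring
    have hαdk : α * d k < 1 := lt_of_le_of_lt
      (mul_le_mul_of_nonneg_left (hdD k) hα0.le) hαD
    have h1 : ‖μ‖ ^ 2 < 1 := by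
      rw [hn2, hre, him]
      nlinarith [mul_le_mul_of_nonneg_left hxy hα0.le,
        mul_lt_mul_of_pos_right hαdk hx, mul_pos hα0 hx]
    nlinarith [norm_nonneg μ]
end

section
/- For 0 < ρ < 1 and integer q > 1, the partial sums satisfy, for all t ≥ 1: Σ_{k=1}^{t} k^(q-1) ρᵏ ≤ ((1-q)/(e·log ρ))^(q-1) + Σ_{j=0}^{q-1} (q-1)!·ρ / (j!·(-log ρ)^(q-j)). -/
open Real Finset
noncomputable def fb (b : ℝ) (n : ℕ) (s : ℝ) : ℝ := s ^ n * Real.exp (-(b * s))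
lemma fb_cont (b : ℝ) (n : ℕ) : Continuous (fb b n) := by unfold fb; fun_prop
lemma fb_hasDerivAt (b : ℝ) (n : ℕ) (s : ℝ) :
    HasDerivAt (fb b n) (Real.exp (-(b * s)) * ((n : ℝ) * s ^ (n - 1) - b * s ^ n)) s := by
  have h1 : HasDerivAt (fun x : ℝ => x ^ n) ((n : ℝ) * s ^ (n - 1)) s := hasDerivAt_pow n s
  have h2 : HasDerivAt (fun x : ℝ => Real.exp (-(b * x))) (Real.exp (-(b * s)) * (-(b * 1))) s :=
    (((hasDerivAt_id s).const_mul b).neg).exp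
  have h := h1.fun_mul h2
  refine h.congr_deriv ?_
  ring

lemma deriv_factor (b : ℝ) (n : ℕ) (hn : 1 ≤ n) (s : ℝ) :
    (n : ℝ) * s ^ (n - 1) - b * s ^ n = s ^ (n - 1) * ((n : ℝ) - b * s) := by
  have : s ^ n = s ^ (n - 1) * s := by
    conv_lhs => rw [show n = (n - 1) + 1 by omega]
    rw [pow_succ]
  rw [this]; ring

lemma fb_monoOn (b : ℝ) (hb : 0 < b) (n : ℕ) (hn : 1 ≤ n) :
    MonotoneOn (fb b n) (Set.Icc 0 ((n : ℝ) / b)) := by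
  apply monotoneOn_of_deriv_nonneg (convex_Icc _ _) (fb_cont b n).continuousOn
  · intro x _; exact (fb_hasDerivAt b n x).differentiableAt.differentiableWithinAt
  · intro x hx
    rw [interior_Icc] at hx
    rw [(fb_hasDerivAt b n x).deriv, deriv_factor b n hn]
    have h1 : 0 < x := hx.1
    have h2 : b * x < n := by
      have := hx.2
      calc b * x < b * ((n : ℝ) / b) := by gcongr
        _ = n := by field_simp
    have := Real.exp_pos (-(b * x))
    have hp : (0:ℝ) ≤ x ^ (n - 1) := by positivity
    nlinarith [mul_nonneg hp (by linarith : (0:ℝ) ≤ (n:ℝ) - b * x)]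

lemma fb_antiOn (b : ℝ) (hb : 0 < b) (n : ℕ) (hn : 1 ≤ n) :
    AntitoneOn (fb b n) (Set.Ici ((n : ℝ) / b)) := by
  apply antitoneOn_of_deriv_nonpos (convex_Ici _) (fb_cont b n).continuousOn
  · intro x _; exact (fb_hasDerivAt b n x).differentiableAt.differentiableWithinAt
  · intro x hx
    rw [interior_Ici] at hx
    rw [(fb_hasDerivAt b n x).deriv, deriv_factor b n hn]
    have hT : 0 < (n : ℝ) / b := by positivity
    have h1 : 0 < x := lt_trans hT hx
    have h2 : (n : ℝ) < b * x := by
      have : b * ((n : ℝ) / b) < b * x := by gcongr; exact hx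
      calc (n:ℝ) = b * ((n:ℝ)/b) := by field_simp
        _ < b * x := this
    have he := Real.exp_pos (-(b * x))
    have hp : (0:ℝ) ≤ x ^ (n - 1) := by positivity
    nlinarith [mul_nonneg hp (by linarith : (0:ℝ) ≤ b * x - (n:ℝ))]

lemma fb_le_max (b : ℝ) (hb : 0 < b) (n : ℕ) (hn : 1 ≤ n) {s : ℝ} (hs : 0 ≤ s) :
    fb b n s ≤ fb b n ((n : ℝ) / b) := by
  have hT : 0 ≤ (n : ℝ) / b := by positivity
  rcases le_total s ((n : ℝ) / b) with h | h
  · exact fb_monoOn b hb n hn ⟨hs, h⟩ ⟨hT, le_refl _⟩ h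
  · exact fb_antiOn b hb n hn (Set.self_mem_Ici) h h

lemma min_le_fb (b : ℝ) (hb : 0 < b) (n : ℕ) (hn : 1 ≤ n) {u v s : ℝ}
    (hu : 0 ≤ u) (hus : u ≤ s) (hsv : s ≤ v) :
    min (fb b n u) (fb b n v) ≤ fb b n s := by
  rcases le_total s ((n : ℝ) / b) with h | h
  · exact le_trans (min_le_left _ _) (fb_monoOn b hb n hn ⟨hu, le_trans hus h⟩ ⟨le_trans hu hus, h⟩ hus)
  · exact le_trans (min_le_right _ _) (fb_antiOn b hb n hn h (le_trans h hsv) hsv)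

noncomputable def cb (b : ℝ) (n j : ℕ) : ℝ := (n.factorial : ℝ) / (j.factorial * b ^ (n + 1 - j))

noncomputable def Fb (b : ℝ) (n : ℕ) (s : ℝ) : ℝ :=
  -(Real.exp (-(b * s)) * ∑ j ∈ range (n + 1), cb b n j * s ^ j)

lemma cb_nonneg (b : ℝ) (hb : 0 < b) (n j : ℕ) : 0 ≤ cb b n j := by
  unfold cb; positivity

lemma key_identity (b : ℝ) (hb : 0 < b) (n : ℕ) (s : ℝ) :
    b * ∑ j ∈ range (n + 1), cb b n j * s ^ j
      - ∑ j ∈ range (n + 1), cb b n j * ((j : ℝ) * s ^ (j - 1)) = s ^ n := by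
  have hb' : b ≠ 0 := ne_of_gt hb
  have h1 : ∑ j ∈ range (n + 1), cb b n j * ((j : ℝ) * s ^ (j - 1))
      = ∑ j ∈ range n, b * (cb b n j * s ^ j) := by
    rw [Finset.sum_range_succ']
    norm_num
    apply Finset.sum_congr rfl
    intro j hj
    have hjn : j < n := Finset.mem_range.mp hj
    have e1 : n + 1 - (j + 1) = n - j := by omega
    have e2 : n + 1 - j = (n - j) + 1 := by omega
    unfold cb
    rw [e1, e2, pow_succ, Nat.factorial_succ]
    have h3 : (j.factorial : ℝ) ≠ 0 := Nat.cast_ne_zero.mpr j.factorial_ne_zero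
    have h4 : (b : ℝ) ^ (n - j) ≠ 0 := pow_ne_zero _ hb'
    push_cast
    field_simp
  rw [h1, Finset.mul_sum]
  have hc : b * (cb b n n * s ^ n) = s ^ n := by
    unfold cb
    have : n + 1 - n = 1 := by omega
    rw [this, pow_one]
    have h3 : (n.factorial : ℝ) ≠ 0 := Nat.cast_ne_zero.mpr n.factorial_ne_zero
    field_simp
  rw [Finset.sum_range_succ, add_sub_cancel_left]
  exact hc

lemma Fb_hasDerivAt (b : ℝ) (hb : 0 < b) (n : ℕ) (s : ℝ) :
    HasDerivAt (Fb b n) (fb b n s) s := by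
  have hG : HasDerivAt (fun x : ℝ => ∑ j ∈ range (n + 1), cb b n j * x ^ j)
      (∑ j ∈ range (n + 1), cb b n j * ((j : ℝ) * s ^ (j - 1))) s := by
    apply HasDerivAt.fun_sum
    intro j _
    exact (hasDerivAt_pow j s).const_mul (cb b n j)
  have hE : HasDerivAt (fun x : ℝ => Real.exp (-(b * x))) (Real.exp (-(b * s)) * (-(b * 1))) s :=
    (((hasDerivAt_id s).const_mul b).neg).exp
  have h := (hE.fun_mul hG).fun_neg
  refine h.congr_deriv ?_
  symm
  unfold fb
  linear_combination (-Real.exp (-(b * s))) * key_identity b hb n s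

lemma integral_fb (b : ℝ) (hb : 0 < b) (n : ℕ) {t : ℝ} :
    ∫ s in (1:ℝ)..t, fb b n s = Fb b n t - Fb b n 1 := by
  apply intervalIntegral.integral_eq_sub_of_hasDerivAt
  · intro x _; exact Fb_hasDerivAt b hb n x
  · exact (fb_cont b n).intervalIntegrable 1 t

lemma Fb_nonpos (b : ℝ) (hb : 0 < b) (n : ℕ) {t : ℝ} (ht : 0 ≤ t) : Fb b n t ≤ 0 := by
  unfold Fb
  simp only [neg_nonpos]
  apply mul_nonneg (Real.exp_nonneg _)
  apply Finset.sum_nonneg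
  intro j _
  exact mul_nonneg (cb_nonneg b hb n j) (by positivity)

lemma sum_fb_le (b : ℝ) (hb : 0 < b) (n : ℕ) (hn : 1 ≤ n) :
    ∀ t : ℕ, 1 ≤ t →
      ∑ k ∈ Finset.Icc 1 t, fb b n k ≤
        fb b n (max 1 (min (t : ℝ) ((n : ℝ) / b))) + ∫ s in (1:ℝ)..(t : ℝ), fb b n s := by
  intro t ht
  induction t, ht using Nat.le_induction with
  | base =>
      have hc : max 1 (min ((1:ℕ) : ℝ) ((n : ℝ) / b)) = 1 := by
        rw [Nat.cast_one]; exact max_eq_left (min_le_left _ _)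
      rw [hc]
      simp
  | succ t ht ih =>
      have hu1 : (1:ℝ) ≤ (t : ℝ) := by exact_mod_cast ht
      set T := (n : ℝ) / b with hTdef
      set u := (t : ℝ) with hudef
      have hcast : ((t + 1 : ℕ) : ℝ) = u + 1 := by push_cast; rfl
      have hint : (∫ s in (1:ℝ)..((t + 1 : ℕ) : ℝ), fb b n s)
          = (∫ s in (1:ℝ)..u, fb b n s) + ∫ s in u..(u + 1), fb b n s := by
        rw [hcast, intervalIntegral.integral_add_adjacent_intervals
          ((fb_cont b n).intervalIntegrable 1 u) ((fb_cont b n).intervalIntegrable u (u+1))]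
      have hmin : min (fb b n u) (fb b n (u + 1)) ≤ ∫ s in u..(u + 1), fb b n s := by
        have h := intervalIntegral.integral_mono_on (μ := MeasureTheory.volume)
          (by linarith : u ≤ u + 1)
          intervalIntegrable_const ((fb_cont b n).intervalIntegrable u (u + 1))
          (fun x hx => min_le_fb b hb n hn (by linarith) hx.1 hx.2)
        rw [intervalIntegral.integral_const, smul_eq_mul, add_sub_cancel_left, one_mul] at h
        exact h
      have hstep : fb b n (max 1 (min u T)) + fb b n (u + 1) ≤
          fb b n (max 1 (min (u + 1) T)) + min (fb b n u) (fb b n (u + 1)) := by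
        rcases le_total (u + 1) T with h | h
        · have c1 : max 1 (min u T) = u := by
            rw [min_eq_left (by linarith), max_eq_right hu1]
          have c2 : max 1 (min (u + 1) T) = u + 1 := by
            rw [min_eq_left h, max_eq_right (by linarith)]
          have hm : fb b n u ≤ fb b n (u + 1) :=
            fb_monoOn b hb n hn ⟨by linarith, by linarith⟩ ⟨by linarith, h⟩ (by linarith)
          rw [c1, c2, min_eq_left hm]
          linarith
        · rcases le_total T u with h2 | h2
          · have c12 : max 1 (min u T) = max 1 (min (u + 1) T) := by
              rw [min_eq_right h2, min_eq_right (by linarith)]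
            have hm : fb b n (u + 1) ≤ fb b n u :=
              fb_antiOn b hb n hn (Set.mem_Ici.mpr h2) (Set.mem_Ici.mpr (by linarith)) (by linarith)
            exact add_le_add (le_of_eq (congrArg (fb b n) c12)) (min_eq_right hm).ge
          · have c1 : max 1 (min u T) = u := by
              rw [min_eq_left h2, max_eq_right hu1]
            have c2 : max 1 (min (u + 1) T) = T := by
              rw [min_eq_right h, max_eq_right (by linarith : (1:ℝ) ≤ T)]
            rw [c1, c2]
            have h1' : fb b n u ≤ fb b n T := fb_le_max b hb n hn (by linarith)
            have h2' : fb b n (u + 1) ≤ fb b n T := fb_le_max b hb n hn (by linarith)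
            have hmm := max_add_min (fb b n u) (fb b n (u + 1))
            have hmx : max (fb b n u) (fb b n (u + 1)) ≤ fb b n T :=
              max_le h1' h2'
            linarith
      rw [Finset.sum_Icc_succ_top (by omega : 1 ≤ t + 1), hint, hcast]
      linarith

/-- For 0 < ρ < 1 and integer q > 1, for all t ≥ 1:
    Σ_{k=1}^{t} k^(q-1) ρᵏ ≤ ((1-q)/(e·log ρ))^(q-1)
      + Σ_{j=0}^{q-1} (q-1)!·ρ/(j!·(-log ρ)^(q-j)). -/
theorem poly_geom_partial_sum_bound (ρ : ℝ) (hρ0 : 0 < ρ) (hρ1 : ρ < 1)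
    (q : ℕ) (hq : 1 < q) :
    ∀ t : ℕ, 1 ≤ t →
      ∑ k ∈ Finset.Icc 1 t, (k : ℝ) ^ (q - 1) * ρ ^ k ≤
        ((1 - (q : ℝ)) / (Real.exp 1 * Real.log ρ)) ^ (q - 1) +
          ∑ j ∈ Finset.range q,
            ((q - 1).factorial : ℝ) * ρ /
              ((j.factorial : ℝ) * (-Real.log ρ) ^ (q - j)) := by
  intro t ht
  have hlog : Real.log ρ < 0 := Real.log_neg hρ0 hρ1
  set b : ℝ := -Real.log ρ with hbdef
  have hb : 0 < b := by rw [hbdef]; linarith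
  set n : ℕ := q - 1 with hndef
  have hn : 1 ≤ n := by omega
  have hqn : q = n + 1 := by omega
  have hb' : b ≠ 0 := ne_of_gt hb
  have hρexp : ∀ k : ℕ, ρ ^ k = Real.exp (-(b * k)) := by
    intro k
    rw [hbdef, show -(-Real.log ρ * (k:ℝ)) = (k:ℝ) * Real.log ρ by ring,
      Real.exp_nat_mul, Real.exp_log hρ0]
  have hsum_eq : ∑ k ∈ Finset.Icc 1 t, (k : ℝ) ^ n * ρ ^ k
      = ∑ k ∈ Finset.Icc 1 t, fb b n k := by
    apply Finset.sum_congr rfl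
    intro k _
    rw [hρexp k]
    rfl
  have hmain := sum_fb_le b hb n hn t ht
  have hTmax : fb b n (max 1 (min (t : ℝ) ((n : ℝ) / b))) ≤ fb b n ((n : ℝ) / b) :=
    fb_le_max b hb n hn (le_trans zero_le_one (le_max_left _ _))
  have hfT : fb b n ((n : ℝ) / b) = ((1 - (q : ℝ)) / (Real.exp 1 * Real.log ρ)) ^ n := by
    unfold fb
    have harg : (1 - (q : ℝ)) / (Real.exp 1 * Real.log ρ) = (n : ℝ) / b * Real.exp (-1) := by
      have h1 : (1 - (q : ℝ)) = -(n : ℝ) := by rw [hqn]; push_cast; ring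
      have h2 : Real.log ρ = -b := by rw [hbdef]; ring
      have he : Real.exp 1 ≠ 0 := (Real.exp_pos 1).ne'
      rw [h1, h2, Real.exp_neg]
      field_simp
    rw [harg, mul_pow]
    congr 1
    rw [show -(b * ((n : ℝ) / b)) = (n : ℝ) * (-1) by field_simp, Real.exp_nat_mul]
  have hintle : (∫ s in (1:ℝ)..(t : ℝ), fb b n s) ≤ -Fb b n 1 := by
    rw [integral_fb b hb n]
    have hFt : Fb b n (t : ℝ) ≤ 0 := Fb_nonpos b hb n (by positivity)
    linarith
  have hFb1 : -Fb b n 1 = ∑ j ∈ Finset.range q,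
      ((n.factorial : ℝ) * ρ / ((j.factorial : ℝ) * b ^ (q - j))) := by
    unfold Fb cb
    rw [neg_neg]
    have hρe : Real.exp (-(b * 1)) = ρ := by
      rw [hbdef, show -(-Real.log ρ * 1) = Real.log ρ by ring, Real.exp_log hρ0]
    rw [hρe, Finset.mul_sum, hqn]
    apply Finset.sum_congr rfl
    intro j hj
    rw [one_pow, mul_one]
    ring
  calc ∑ k ∈ Finset.Icc 1 t, (k : ℝ) ^ n * ρ ^ k
      = ∑ k ∈ Finset.Icc 1 t, fb b n k := hsum_eq
    _ ≤ fb b n (max 1 (min (t : ℝ) ((n : ℝ) / b))) + ∫ s in (1:ℝ)..(t : ℝ), fb b n s := hmain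
    _ ≤ fb b n ((n : ℝ) / b) + -Fb b n 1 := add_le_add hTmax hintle
    _ = ((1 - (q : ℝ)) / (Real.exp 1 * Real.log ρ)) ^ n
        + ∑ j ∈ Finset.range q, ((n.factorial : ℝ) * ρ / ((j.factorial : ℝ) * b ^ (q - j))) := by
          rw [hfT, hFb1]
end
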